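/- Let 0 < α ≤ 1, T > 0, a ≥ 0, K ≥ 0, and let Ψ : [0,T] → ℝ be continuous and nonnegative. Assume that Ψ(t) ≤ a + K ∫_0^t (t−τ)^{α−1} Ψ(τ) dτ for all t ∈ [0,T]. Then Ψ(t) ≤ a E_{α,1}(K Γ(α) t^α) = a Σ_{n=0}^∞ (K Γ(α) t^α)^n / Γ(αn+1) for all t ∈ [0,T]. -/

import Mathlib

open MeasureTheory intervalIntegral Filter Set

/-- Real beta integral, scaled. -/
lemma realBetaScaled {p q t : ℝ} (hp : 0 < p) (hq : 0 < q) (ht : 0 < t) :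
    ∫ x in (0:ℝ)..t, x ^ (p - 1) * (t - x) ^ (q - 1)
      = Real.Gamma p * Real.Gamma q / Real.Gamma (p + q) * t ^ (p + q - 1) := by
  have hpq : 0 < p + q := by linarith
  have hG : (0:ℝ) < Real.Gamma (p + q) := Real.Gamma_pos_of_pos hpq
  have hB : Complex.betaIntegral p q
      = ((Real.Gamma p * Real.Gamma q / Real.Gamma (p + q) : ℝ) : ℂ) := by
    have h := Complex.Gamma_mul_Gamma_eq_betaIntegral (s := (p:ℂ)) (t := (q:ℂ))
      (by simpa using hp) (by simpa using hq)
    rw [← Complex.ofReal_add, Complex.Gamma_ofReal, Complex.Gamma_ofReal,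
      Complex.Gamma_ofReal] at h
    have hne : ((Real.Gamma (p + q) : ℝ) : ℂ) ≠ 0 := by exact_mod_cast hG.ne'
    rw [Complex.ofReal_div, Complex.ofReal_mul, eq_div_iff hne]
    linear_combination -h
  have h1 := Complex.betaIntegral_scaled (p:ℂ) (q:ℂ) ht
  have h2 : (∫ x in (0:ℝ)..t, (x:ℂ) ^ ((p:ℂ) - 1) * ((t:ℂ) - (x:ℂ)) ^ ((q:ℂ) - 1))
      = ((∫ x in (0:ℝ)..t, x ^ (p - 1) * (t - x) ^ (q - 1) : ℝ) : ℂ) := by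
    rw [← intervalIntegral.integral_ofReal]
    apply intervalIntegral.integral_congr
    intro x hx
    rw [Set.uIcc_of_le ht.le] at hx
    show (x:ℂ) ^ ((p:ℂ) - 1) * ((t:ℂ) - (x:ℂ)) ^ ((q:ℂ) - 1) = ((x ^ (p - 1) * (t - x) ^ (q - 1) : ℝ) : ℂ)
    rw [show ((p:ℂ) - 1) = ((p - 1 : ℝ) : ℂ) by push_cast; ring,
      show ((q:ℂ) - 1) = ((q - 1 : ℝ) : ℂ) by push_cast; ring,
      show ((t:ℂ) - (x:ℂ)) = ((t - x : ℝ) : ℂ) by push_cast; ring,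
      ← Complex.ofReal_cpow hx.1, ← Complex.ofReal_cpow (by linarith [hx.2] : (0:ℝ) ≤ t - x),
      Complex.ofReal_mul]
  have h3 : ((t:ℂ)) ^ ((p:ℂ) + (q:ℂ) - 1) = ((t ^ (p + q - 1) : ℝ) : ℂ) := by
    rw [Complex.ofReal_cpow ht.le]
    push_cast
    ring_nf
  rw [h2, h3, hB] at h1
  rw [mul_comm]
  exact_mod_cast h1

lemma eventually_pow_le_Gamma {α : ℝ} (hα0 : 0 < α) (y : ℝ) (hy : 0 ≤ y) :
    ∀ᶠ n : ℕ in atTop, y ^ n ≤ Real.Gamma (α * n + 1) := by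
  obtain ⟨j, hj⟩ : ∃ j : ℕ, 2 / α ≤ j := exists_nat_ge _
  have hjpos : 0 < (j:ℝ) := lt_of_lt_of_le (by positivity) hj
  have hαj : 2 ≤ α * j := by
    rw [div_le_iff₀ hα0] at hj
    nlinarith
  set b : ℕ := ⌈(y + 1) ^ j⌉₊ + 1 with hbdef
  have hby : (y + 1) ^ j ≤ (b : ℝ) := by
    calc (y + 1) ^ j ≤ (⌈(y + 1) ^ j⌉₊ : ℝ) := Nat.le_ceil _
    _ ≤ (b : ℝ) := by exact_mod_cast Nat.le_succ _
  refine eventually_atTop.2 ⟨j * (b + 1) + 1, fun n hn => ?_⟩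
  have hnR : (j : ℝ) * (b + 1) + 1 ≤ (n : ℝ) := by exact_mod_cast hn
  have hnj : (j : ℝ) * (b + 1) ≤ (n : ℝ) := by linarith
  -- α * n is large
  have hαn : 2 * ((b : ℝ) + 1) ≤ α * n := by
    have h1 : 2 * (n : ℝ) ≤ (α * j) * n := by nlinarith
    have h2 : (j : ℝ) * (2 * ((b:ℝ) + 1)) ≤ 2 * n := by nlinarith
    calc 2 * ((b : ℝ) + 1) = (j : ℝ) * (2 * ((b:ℝ)+1)) / j := by field_simp
    _ ≤ 2 * n / j := by gcongr
    _ ≤ (α * j) * n / j := by gcongr <;> nlinarith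
    _ = α * n := by field_simp
  have hb1 : (1:ℝ) ≤ b := by
    have : 1 ≤ b := Nat.succ_le_succ (Nat.zero_le _)
    exact_mod_cast this
  set m' : ℕ := ⌊α * n⌋₊ with hm'def
  have hm'le : (m' : ℝ) ≤ α * n := Nat.floor_le (by positivity)
  have hm'gt : α * n - 1 < (m' : ℝ) := Nat.sub_one_lt_floor _
  have hbm' : b ≤ m' := by
    have : (b : ℝ) ≤ (m' : ℝ) := by linarith
    exact_mod_cast this
  set m : ℕ := m' - b with hmdef
  have hm'eq : m' = b + m := by omega
  have hmR : α * n - 1 - b ≤ (m : ℝ) := by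
    have : (m : ℝ) = (m' : ℝ) - b := by
      rw [hmdef]; push_cast [hbm']; ring
    linarith
  have hnjm : (n : ℝ) ≤ (j : ℝ) * m := by nlinarith
  have hnjm' : n ≤ j * m := by exact_mod_cast hnjm
  calc y ^ n ≤ (y + 1) ^ n := pow_le_pow_left₀ hy (by linarith) n
  _ ≤ (y + 1) ^ (j * m) := pow_le_pow_right₀ (by linarith) hnjm'
  _ = ((y + 1) ^ j) ^ m := by rw [pow_mul]
  _ ≤ (b : ℝ) ^ m := pow_le_pow_left₀ (by positivity) hby m
  _ ≤ ((b + m).factorial : ℝ) := by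
      have h1 : b ^ m ≤ (b + m).factorial := by
        have := Nat.factorial_mul_pow_sub_le_factorial (Nat.le_add_right b m)
        simp only [Nat.add_sub_cancel_left] at this
        calc b ^ m ≤ b.factorial * b ^ m := Nat.le_mul_of_pos_left _ (Nat.factorial_pos b)
        _ ≤ (b + m).factorial := this
      exact_mod_cast h1
  _ = Real.Gamma ((m' : ℝ) + 1) := by rw [Real.Gamma_nat_eq_factorial, hm'eq]
  _ ≤ Real.Gamma (α * n + 1) := by
      apply Real.Gamma_strictMonoOn_Ici.monotoneOn
      · simp only [Set.mem_Ici]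
        have : (1:ℝ) ≤ (m' : ℝ) := by linarith
        linarith
      · simp only [Set.mem_Ici]; linarith
      · linarith

lemma summable_ml {α : ℝ} (hα0 : 0 < α) {x : ℝ} (hx : 0 ≤ x) :
    Summable (fun n : ℕ => x ^ n / Real.Gamma (α * n + 1)) := by
  have hev := eventually_pow_le_Gamma hα0 (2 * x + 2) (by linarith)
  apply summable_of_isBigO_nat summable_geometric_two
  rw [Asymptotics.isBigO_iff]
  refine ⟨1, ?_⟩
  filter_upwards [hev] with n hn
  have hG : (0:ℝ) < Real.Gamma (α * n + 1) := Real.Gamma_pos_of_pos (by positivity)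
  have h2 : (0:ℝ) < (2 * x + 2) ^ n := by positivity
  have hle : x ^ n / Real.Gamma (α * n + 1) ≤ ((1:ℝ) / 2) ^ n := by
    calc x ^ n / Real.Gamma (α * n + 1) ≤ x ^ n / (2 * x + 2) ^ n :=
      div_le_div_of_nonneg_left (by positivity) h2 hn
    _ = (x / (2 * x + 2)) ^ n := by rw [div_pow]
    _ ≤ ((1:ℝ) / 2) ^ n := by
        apply pow_le_pow_left₀ (by positivity)
        rw [div_le_div_iff₀ (by linarith) (by norm_num)]
        linarith
  rw [Real.norm_eq_abs, Real.norm_eq_abs, abs_of_nonneg (by positivity),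
    abs_of_nonneg (by positivity), one_mul]
  exact hle
/-- The key kernel integral. -/
lemma key_int {α t : ℝ} (hα0 : 0 < α) (ht : 0 < t) (c : ℝ) (k : ℕ) :
    ∫ τ in (0:ℝ)..t, (t - τ) ^ (α - 1) * ((c * τ ^ α) ^ k / Real.Gamma (α * k + 1))
      = Real.Gamma α * c ^ k * (t ^ α) ^ (k + 1) / Real.Gamma (α * (k + 1 : ℕ) + 1) := by
  have hGk : (0:ℝ) < Real.Gamma (α * k + 1) := Real.Gamma_pos_of_pos (by positivity)
  have h1 : EqOn (fun τ : ℝ => (t - τ) ^ (α - 1) * ((c * τ ^ α) ^ k / Real.Gamma (α * k + 1)))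
      (fun τ : ℝ => (c ^ k / Real.Gamma (α * k + 1)) *
        (τ ^ ((α * k + 1) - 1) * (t - τ) ^ (α - 1))) (Set.uIcc 0 t) := by
    intro τ hτ
    rw [Set.uIcc_of_le ht.le] at hτ
    have h2 : (τ ^ α) ^ k = τ ^ ((α * k + 1) - 1) := by
      rw [show (α * (k:ℝ) + 1) - 1 = α * k by ring, Real.rpow_mul hτ.1, Real.rpow_natCast]
    simp only [mul_pow, h2]
    ring
  rw [intervalIntegral.integral_congr h1, intervalIntegral.integral_const_mul,
    realBetaScaled (by positivity) hα0 ht]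
  have h3 : α * (k:ℝ) + 1 + α - 1 = α * ((k+1 : ℕ) : ℝ) := by push_cast; ring
  have h4 : α * (k:ℝ) + 1 + α = α * ((k+1 : ℕ) : ℝ) + 1 := by push_cast; ring
  rw [h3, h4, Real.rpow_mul ht.le, Real.rpow_natCast]
  have hGk2 : (0:ℝ) < Real.Gamma (α * ((k+1 : ℕ) : ℝ) + 1) := by
    apply Real.Gamma_pos_of_pos; positivity
  field_simp

/-- The generalized (singular-kernel) Gronwall inequality: if
`Ψ(t) ≤ a + K ∫_0^t (t-τ)^{α-1} Ψ(τ) dτ` on `[0,T]`, then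
`Ψ(t) ≤ a E_{α,1}(K Γ(α) t^α) = a Σ_{n=0}^∞ (K Γ(α) t^α)^n / Γ(αn+1)`. -/
theorem generalized_gronwall (α T a K : ℝ) (hα0 : 0 < α) (hα1 : α ≤ 1) (hT : 0 < T)
    (ha : 0 ≤ a) (hK : 0 ≤ K) (Ψ : ℝ → ℝ)
    (hΨc : ContinuousOn Ψ (Set.Icc (0 : ℝ) T))
    (hΨ0 : ∀ t ∈ Set.Icc (0 : ℝ) T, 0 ≤ Ψ t)
    (hineq : ∀ t ∈ Set.Icc (0 : ℝ) T,
      Ψ t ≤ a + K * ∫ τ in (0 : ℝ)..t, (t - τ) ^ (α - 1) * Ψ τ) :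
    ∀ t ∈ Set.Icc (0 : ℝ) T,
      Ψ t ≤ a * ∑' n : ℕ, (K * Real.Gamma α * t ^ α) ^ n / Real.Gamma (α * n + 1) := by
  obtain ⟨C, hC⟩ := isCompact_Icc.exists_bound_of_continuousOn hΨc
  set c : ℝ := K * Real.Gamma α with hc
  have hΓα : (0:ℝ) < Real.Gamma α := Real.Gamma_pos_of_pos hα0
  have hc0 : 0 ≤ c := mul_nonneg hK hΓα.le
  have hGpos : ∀ n : ℕ, (0:ℝ) < Real.Gamma (α * n + 1) := fun n =>
    Real.Gamma_pos_of_pos (by positivity)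
  -- continuity of the iterate terms
  have hrp : ContinuousOn (fun τ : ℝ => τ ^ α) (Set.Icc 0 T) := fun x _ =>
    (Real.continuousAt_rpow_const x α (Or.inr hα0.le)).continuousWithinAt
  have hgc : ∀ k : ℕ, ContinuousOn
      (fun τ : ℝ => (c * τ ^ α) ^ k / Real.Gamma (α * k + 1)) (Set.Icc 0 T) := fun k =>
    ((continuousOn_const.mul hrp).pow k).div_const _
  -- the main induction
  have key : ∀ n : ℕ, ∀ t ∈ Set.Icc (0:ℝ) T,
      Ψ t ≤ a * ∑ k ∈ Finset.range n, (c * t ^ α) ^ k / Real.Gamma (α * k + 1)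
        + C * ((c * t ^ α) ^ n / Real.Gamma (α * n + 1)) := by
    intro n
    induction n with
    | zero =>
      intro t ht
      have := hC t ht
      rw [Real.norm_eq_abs] at this
      simp only [Finset.range_zero, Finset.sum_empty, mul_zero, zero_add, pow_zero,
        Nat.cast_zero, mul_zero, zero_add, Real.Gamma_one]
      have h1 := le_of_abs_le this
      linarith
    | succ n IH =>
      intro t ht
      rcases ht.1.eq_or_lt with h0 | htpos
      · -- t = 0
        subst h0
        have h1 := hineq 0 ht
        rw [intervalIntegral.integral_same, mul_zero, add_zero] at h1
        have hz : (0:ℝ) ^ α = 0 := Real.zero_rpow hα0.ne'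
        rw [Finset.sum_range_succ']
        simp only [hz, mul_zero, zero_pow (Nat.succ_ne_zero _), pow_zero, Nat.cast_zero,
          mul_zero, zero_add, Real.Gamma_one, zero_div, div_one, mul_zero, add_zero]
        simp only [Finset.sum_const_zero, zero_add, mul_one]
        linarith
      · -- 0 < t
        have ht0 : (0:ℝ) ≤ t := ht.1
        have hsub : Set.Icc (0:ℝ) t ⊆ Set.Icc (0:ℝ) T := Set.Icc_subset_Icc le_rfl ht.2
        have huIcc : Set.uIcc (0:ℝ) t = Set.Icc 0 t := Set.uIcc_of_le ht0
        -- kernel integrability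
        have hker : IntervalIntegrable (fun τ : ℝ => (t - τ) ^ (α - 1)) volume 0 t := by
          have h0 : IntervalIntegrable (fun τ : ℝ => τ ^ (α - 1)) volume 0 t :=
            intervalIntegral.intervalIntegrable_rpow' (by linarith)
          have h1 := h0.comp_sub_left t
          simpa using h1.symm
        have hintb : ∀ g : ℝ → ℝ, ContinuousOn g (Set.Icc 0 t) →
            IntervalIntegrable (fun τ => (t - τ) ^ (α - 1) * g τ) volume 0 t := by
          intro g hg
          exact hker.mul_continuousOn (by rwa [huIcc])
        have hkernonneg : ∀ τ ∈ Set.Icc (0:ℝ) t, (0:ℝ) ≤ (t - τ) ^ (α - 1) := fun τ hτ =>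
          Real.rpow_nonneg (by linarith [hτ.2]) _
        set F : ℝ → ℝ := fun τ => a * ∑ k ∈ Finset.range n,
            (c * τ ^ α) ^ k / Real.Gamma (α * k + 1)
          + C * ((c * τ ^ α) ^ n / Real.Gamma (α * n + 1)) with hF
        have hFc : ContinuousOn F (Set.Icc 0 t) := by
          apply ContinuousOn.add
          · exact (continuousOn_const.mul
              (continuousOn_finset_sum _ fun k _ => (hgc k).mono hsub))
          · exact continuousOn_const.mul ((hgc n).mono hsub)
        -- step 1: monotonicity of the integral
        have hmono : (∫ τ in (0:ℝ)..t, (t - τ) ^ (α - 1) * Ψ τ)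
            ≤ ∫ τ in (0:ℝ)..t, (t - τ) ^ (α - 1) * F τ := by
          apply intervalIntegral.integral_mono_on ht0
            (hintb Ψ (hΨc.mono hsub)) (hintb F hFc)
          intro x hx
          exact mul_le_mul_of_nonneg_left (IH x (hsub hx)) (hkernonneg x hx)
        -- step 2: compute the right integral
        have hInt_g : ∀ k : ℕ, IntervalIntegrable
            (fun τ => (t - τ) ^ (α - 1) * ((c * τ ^ α) ^ k / Real.Gamma (α * k + 1)))
            volume 0 t := fun k => hintb _ ((hgc k).mono hsub)
        have hsplit : (∫ τ in (0:ℝ)..t, (t - τ) ^ (α - 1) * F τ)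
            = a * ∑ k ∈ Finset.range n, (∫ τ in (0:ℝ)..t,
                (t - τ) ^ (α - 1) * ((c * τ ^ α) ^ k / Real.Gamma (α * k + 1)))
              + C * (∫ τ in (0:ℝ)..t,
                (t - τ) ^ (α - 1) * ((c * τ ^ α) ^ n / Real.Gamma (α * n + 1))) := by
          have heq : EqOn (fun τ : ℝ => (t - τ) ^ (α - 1) * F τ)
              (fun τ : ℝ => (∑ k ∈ Finset.range n, a *
                ((t - τ) ^ (α - 1) * ((c * τ ^ α) ^ k / Real.Gamma (α * k + 1))))
                + C * ((t - τ) ^ (α - 1) * ((c * τ ^ α) ^ n / Real.Gamma (α * n + 1))))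
              (Set.uIcc 0 t) := by
            intro τ _
            simp only [hF]
            rw [mul_add]
            congr 1
            · simp only [Finset.mul_sum]
              exact Finset.sum_congr rfl fun k _ => by ring
            · ring
          have hfa : IntervalIntegrable (fun τ : ℝ => ∑ k ∈ Finset.range n,
              a * ((t - τ) ^ (α - 1) * ((c * τ ^ α) ^ k / Real.Gamma (α * k + 1))))
              volume 0 t := by
            have h := IntervalIntegrable.sum (μ := volume) (Finset.range n)
              (f := fun (k : ℕ) (τ : ℝ) =>
                a * ((t - τ) ^ (α - 1) * ((c * τ ^ α) ^ k / Real.Gamma (α * k + 1))))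
              (fun k _ => ((hInt_g k).const_mul a))
            simpa [Finset.sum_fn] using h
          rw [intervalIntegral.integral_congr heq,
            intervalIntegral.integral_add hfa ((hInt_g n).const_mul C),
            intervalIntegral.integral_finset_sum fun k _ => (hInt_g k).const_mul a]
          simp only [intervalIntegral.integral_const_mul]
          rw [← Finset.mul_sum]
        -- step 3: assemble
        have h1 := hineq t ht
        have h2 : Ψ t ≤ a + K * ∫ τ in (0:ℝ)..t, (t - τ) ^ (α - 1) * F τ := by
          calc Ψ t ≤ a + K * ∫ τ in (0:ℝ)..t, (t - τ) ^ (α - 1) * Ψ τ := h1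
          _ ≤ _ := by
            apply add_le_add_right
            exact mul_le_mul_of_nonneg_left hmono hK
        refine h2.trans (le_of_eq ?_)
        rw [hsplit]
        simp only [key_int hα0 htpos c]
        rw [Finset.sum_range_succ' (fun k => (c * t ^ α) ^ k / Real.Gamma (α * k + 1)) n]
        have hgk : ∀ k : ℕ,
            (c * t ^ α) ^ (k + 1) / Real.Gamma (α * ((k + 1 : ℕ) : ℝ) + 1)
              = K * (Real.Gamma α * c ^ k * (t ^ α) ^ (k + 1)
                / Real.Gamma (α * ((k + 1 : ℕ) : ℝ) + 1)) := by
          intro k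
          rw [show (c * t ^ α) ^ (k + 1)
              = K * (Real.Gamma α * c ^ k * (t ^ α) ^ (k + 1)) by rw [mul_pow, hc]; ring,
            mul_div_assoc]
        simp only [hgk]
        simp only [pow_zero, Nat.cast_zero, mul_zero, zero_add, Real.Gamma_one, div_one]
        rw [← Finset.mul_sum]
        ring
  -- conclude via the limit
  intro t ht
  have hx0 : 0 ≤ c * t ^ α := mul_nonneg hc0 (Real.rpow_nonneg ht.1 _)
  have hsum : Summable (fun n : ℕ => (c * t ^ α) ^ n / Real.Gamma (α * n + 1)) :=
    summable_ml hα0 hx0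
  have hterm0 : Tendsto (fun n : ℕ =>
      a * (∑' m : ℕ, (c * t ^ α) ^ m / Real.Gamma (α * m + 1))
        + C * ((c * t ^ α) ^ n / Real.Gamma (α * n + 1))) atTop
      (nhds (a * (∑' m : ℕ, (c * t ^ α) ^ m / Real.Gamma (α * m + 1)) + C * 0)) := by
    exact tendsto_const_nhds.add (hsum.tendsto_atTop_zero.const_mul C)
  have hle : ∀ n : ℕ, Ψ t ≤ a * (∑' m : ℕ, (c * t ^ α) ^ m / Real.Gamma (α * m + 1))
      + C * ((c * t ^ α) ^ n / Real.Gamma (α * n + 1)) := by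
    intro n
    refine (key n t ht).trans (add_le_add_left ?_ _)
    apply mul_le_mul_of_nonneg_left ?_ ha
    apply Summable.sum_le_tsum _ (fun i _ => ?_) hsum
    positivity
  have := ge_of_tendsto' hterm0 hle
  rw [mul_zero, add_zero] at this
  exact this
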